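/- Let h : ℝ^m → ℝ^n be continuously differentiable, let μ > 0, x ∈ ℝ^m, and let d ∈ ℝ^m be the unique solution of (∇h(x)·∇h(x)ᵀ + μI)d = −∇h(x)h(x). Then ‖d‖ ≤ (1/(2√μ))·‖h(x)‖. -/

import Mathlib

/-- Bound on the Levenberg–Marquardt direction: if
`(∇h(x)∇h(x)ᵀ + μI) d = -∇h(x) h(x)` (written with the Jacobian `J = Dh(x)` as
`Jᵀ(J d) + μ d = -Jᵀ h(x)`), then `‖d‖ ≤ ‖h(x)‖/(2√μ)`. -/
theorem stmt_11 {m n : ℕ}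
    (h : EuclideanSpace ℝ (Fin m) → EuclideanSpace ℝ (Fin n))
    (hC : ContDiff ℝ 1 h) (μ : ℝ) (hμ : 0 < μ)
    (x d : EuclideanSpace ℝ (Fin m))
    (hd : ContinuousLinearMap.adjoint (fderiv ℝ h x) ((fderiv ℝ h x) d) + μ • d =
      -(ContinuousLinearMap.adjoint (fderiv ℝ h x) (h x))) :
    ‖d‖ ≤ 1 / (2 * Real.sqrt μ) * ‖h x‖ := by
  set J := fderiv ℝ h x with hJ
  have key : ‖J d‖ ^ 2 + μ * ‖d‖ ^ 2 = -inner ℝ (h x) (J d) := by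
    have := congrArg (fun y => (inner ℝ y d : ℝ)) hd
    simp only [inner_add_left, inner_smul_left, inner_neg_left,
      ContinuousLinearMap.adjoint_inner_left, real_inner_self_eq_norm_sq,
      conj_trivial] at this
    linarith [this, real_inner_comm (J d) (h x)]
  have cs : -inner ℝ (h x) (J d) ≤ ‖h x‖ * ‖J d‖ := by
    have := abs_real_inner_le_norm (h x) (J d)
    have := neg_abs_le (inner ℝ (h x) (J d) : ℝ)
    linarith
  have h1 : μ * ‖d‖ ^ 2 ≤ ‖h x‖ ^ 2 / 4 := by
    nlinarith [key, cs, sq_nonneg (‖J d‖ - ‖h x‖ / 2)]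
  have hs : Real.sqrt μ > 0 := Real.sqrt_pos.mpr hμ
  have hsq : Real.sqrt μ ^ 2 = μ := Real.sq_sqrt hμ.le
  rw [div_mul_eq_mul_div, le_div_iff₀ (by positivity)]
  nlinarith [norm_nonneg d, norm_nonneg (h x), h1]
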